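/- arXiv:2310.01325 — 2 statements merged into one kernel-verified Lean document; each statement's English description precedes it below -/
import Mathlib

section
/- For every integer n ≥ 1, the denominator DB_n of the n-th Bernoulli polynomial B_n(x) is even; in particular, B_n(x) ∉ ℤ[x] for all n ≥ 1. -/
/-- A rational polynomial has only integral coefficients. -/
def IsIntPoly (f : Polynomial ℚ) : Prop := ∀ i, (f.coeff i).den = 1

/-- The least positive integer `d` such that `d • f` has only integral coefficients. -/
noncomputable def polyDenom (f : Polynomial ℚ) : ℕ :=
  sInf {d : ℕ | 0 < d ∧ IsIntPoly ((d : ℚ) • f)}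

/-- Sum of base-`p` digits of `n`. -/
def sd (p n : ℕ) : ℕ := (Nat.digits p n).sum

/-- Radical (squarefree kernel) of `n`. -/
def rad (n : ℕ) : ℕ := ∏ p ∈ n.primeFactors, p

/-- `D n = denom (B_n(x) - B_n)`. -/
noncomputable def D (n : ℕ) : ℕ :=
  polyDenom (Polynomial.bernoulli n - Polynomial.C (bernoulli n))

/-- `DB n = denom (B_n(x))`. -/
noncomputable def DB (n : ℕ) : ℕ := polyDenom (Polynomial.bernoulli n)

/-- `D̂ n`: product of primes `p` with `p ∤ n` and `s_p(n) ≥ p`.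
(Any such prime satisfies `p ≤ s_p(n) ≤ n`.) -/
def Dhat (n : ℕ) : ℕ :=
  ∏ p ∈ (Finset.range (n + 1)).filter (fun p => p.Prime ∧ ¬ p ∣ n ∧ p ≤ sd p n), p

/-- `D̃ n`: product of primes `p` with `p ∣ n` and `s_p(n) ≥ p`. -/
def Dtilde (n : ℕ) : ℕ :=
  ∏ p ∈ (Finset.range (n + 1)).filter (fun p => p.Prime ∧ p ∣ n ∧ p ≤ sd p n), p

/-- `Ď n`: product of primes `p` with `p ∣ n` and `s_p(n) < p`. -/
def Dcheck (n : ℕ) : ℕ :=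
  ∏ p ∈ (Finset.range (n + 1)).filter (fun p => p.Prime ∧ p ∣ n ∧ sd p n < p), p

/-- `D⁺ n`: product of primes `p` with `p > √n` and `s_p(n) ≥ p`. -/
def Dplus (n : ℕ) : ℕ :=
  ∏ p ∈ (Finset.range (n + 1)).filter (fun p => p.Prime ∧ n < p ^ 2 ∧ p ≤ sd p n), p

/-- The sum-of-powers polynomial `S_n(x) = (B_{n+1}(x) - B_{n+1}) / (n+1)`. -/
noncomputable def Spoly (n : ℕ) : Polynomial ℚ :=
  Polynomial.C (((n : ℚ) + 1)⁻¹) *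
    (Polynomial.bernoulli (n + 1) - Polynomial.C (bernoulli (n + 1)))

section StmtAux
open Finset

/-- 2-integrality: odd denominator. -/
def I2 (q : ℚ) : Prop := Odd q.den

lemma odd_of_dvd {a b : ℕ} (h : a ∣ b) (hb : Odd b) : Odd a := by
  rcases h with ⟨c, rfl⟩
  rw [Nat.odd_mul] at hb; exact hb.1

lemma I2_int (z : ℤ) : I2 (z : ℚ) := by simp [I2, Rat.den_intCast]

lemma I2_add {q r : ℚ} (hq : I2 q) (hr : I2 r) : I2 (q + r) :=
  odd_of_dvd (Rat.add_den_dvd q r) (hq.mul hr)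

lemma I2_mul {q r : ℚ} (hq : I2 q) (hr : I2 r) : I2 (q * r) :=
  odd_of_dvd (Rat.mul_den_dvd q r) (hq.mul hr)

lemma I2_sum {s : Finset ℕ} {f : ℕ → ℚ} (h : ∀ i ∈ s, I2 (f i)) : I2 (∑ i ∈ s, f i) := by
  classical
  induction s using Finset.induction with
  | empty => simpa [I2] using ⟨0, rfl⟩
  | insert _ _ hx ih =>
    rw [Finset.sum_insert hx]
    exact I2_add (h _ (Finset.mem_insert_self _ _)) (ih fun i hi => h i (Finset.mem_insert_of_mem hi))

lemma I2_cancel_odd {c : ℕ} {q : ℚ} (hc : Odd c) (h : I2 ((c : ℚ) * q)) : I2 q := by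
  have hc0 : (c : ℚ) ≠ 0 := by
    have : c ≠ 0 := by rintro rfl; simpa using hc
    exact_mod_cast this
  have hq : q = ((c : ℚ) * q) * (Rat.divInt 1 (c : ℤ)) := by
    rw [Rat.divInt_eq_div]
    push_cast
    field_simp
  rw [hq]
  refine I2_mul h (odd_of_dvd ?_ hc)
  have := Rat.den_dvd (1 : ℤ) (c : ℤ)
  exact_mod_cast this

lemma bern_ident (m : ℕ) (hm : 1 ≤ m) :
    ((m : ℚ) + 1) * (2 * bernoulli m) =
      ((m : ℚ) + 1) - ∑ i ∈ range m, bernoulli i * ((m + 1).choose i) * 2 ^ (m + 1 - i) := by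
  have h := sum_range_pow 2 m
  have h1 : (∑ k ∈ range 2, (k : ℚ) ^ m) = 1 := by
    rw [Finset.sum_range_succ, Finset.sum_range_one]
    simp [zero_pow (by omega : m ≠ 0)]
  rw [h1, ← Finset.sum_div, eq_div_iff (by positivity : ((m : ℚ) + 1) ≠ 0)] at h
  rw [Finset.sum_range_succ] at h
  push_cast at h ⊢
  simp only [Nat.add_sub_cancel_left, pow_one] at h
  have hc : ((m + 1).choose m : ℚ) = (m : ℚ) + 1 := by
    rw [Nat.choose_succ_self_right]; push_cast; ring
  rw [hc] at h
  linarith [h]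

lemma I2_two_bernoulli : ∀ m, I2 (2 * bernoulli m) := by
  intro m
  induction m using Nat.strong_induction_on with
  | _ m ih =>
    match m, ih with
    | 0, _ => simpa [bernoulli_zero] using I2_int 2
    | 1, _ => simpa [bernoulli_one, show (2 : ℚ) * (-1/2) = ((-1 : ℤ) : ℚ) by norm_num] using I2_int (-1)
    | (k+2), ih =>
      rcases Nat.even_or_odd (k+2) with he | ho
      · -- even case: use the identity
        set m := k + 2 with hmdef
        have hid := bern_ident m (by omega)
        have hodd : Odd (m + 1) := Even.add_one he
        have hI : I2 (((m : ℚ) + 1) * (2 * bernoulli m)) := by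
          rw [hid]
          have : I2 (∑ i ∈ range m, bernoulli i * ((m + 1).choose i) * 2 ^ (m + 1 - i)) := by
            refine I2_sum fun i hi => ?_
            have hi' : i < m := Finset.mem_range.mp hi
            have : bernoulli i * ((m + 1).choose i : ℚ) * 2 ^ (m + 1 - i) =
                (2 * bernoulli i) * ((((m + 1).choose i : ℤ) * 2 ^ (m - i) : ℤ) : ℚ) := by
              have : m + 1 - i = (m - i) + 1 := by omega
              rw [this]
              push_cast
              ring
            rw [this]
            exact I2_mul (ih i (by omega)) (I2_int _)
          have h1 : I2 (((m : ℚ) + 1)) := by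
            simpa using I2_int ((m : ℤ) + 1)
          have := I2_add h1 (by simpa [I2, Rat.neg_den] using this : I2 (-(∑ i ∈ range m, bernoulli i * ((m + 1).choose i) * 2 ^ (m + 1 - i))))
          simpa [sub_eq_add_neg] using this
        have : ((m : ℚ) + 1) = ((m + 1 : ℕ) : ℚ) := by push_cast; ring
        rw [this] at hI
        exact I2_cancel_odd hodd hI
      · -- odd case: bernoulli = 0
        have : bernoulli (k + 2) = 0 := by
          rw [bernoulli_eq_bernoulli'_of_ne_one (by omega)]
          exact bernoulli'_eq_zero_of_odd ho (by omega)
        rw [this, mul_zero]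
        exact ⟨0, rfl⟩

/-- If `2 * q` is an odd integer, then the denominator of `q` is even. -/
lemma two_dvd_den_of (q : ℚ) (z : ℤ) (hz : Odd z) (h : 2 * q = (z : ℚ)) : 2 ∣ q.den := by
  by_contra hodd
  have hq : Odd q.den := Nat.odd_iff.mpr (by omega)
  have hnum : (2 * q.num : ℚ) = ((z * q.den : ℤ) : ℚ) := by
    have h1 : (q.num : ℚ) = q * q.den := by
      have hd : (q.den : ℚ) ≠ 0 := by exact_mod_cast q.den_nz
      exact (div_eq_iff hd).mp (Rat.num_div_den q)
    push_cast
    rw [h1, ← h]; ring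
  have hint : 2 * q.num = z * q.den := by exact_mod_cast hnum
  have : Even (z * (q.den : ℤ)) := ⟨q.num, by omega⟩
  rw [Int.even_mul] at this
  rcases this with h' | h'
  · exact (Int.not_even_iff_odd.mpr hz) h'
  · have : Even q.den := by exact_mod_cast h'
    exact (Nat.not_even_iff_odd.mpr hq) this

/-- von Staudt–Clausen at `p = 2`: even-indexed Bernoulli numbers have even denominator. -/
lemma two_dvd_den_bernoulli {m : ℕ} (he : Even m) (hm : 2 ≤ m) : 2 ∣ (bernoulli m).den := by
  by_contra hodd
  have hq : I2 (bernoulli m) := Nat.odd_iff.mpr (by omega)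
  have hid := bern_ident m (by omega)
  -- the sum is 2 * s with s 2-integral
  set S := ∑ i ∈ range m, bernoulli i * ((m + 1).choose i : ℚ) * 2 ^ (m + 1 - i) with hS
  have hSdef : S = 2 * ∑ i ∈ range m, (2 * bernoulli i) * ((((m + 1).choose i : ℤ) * 2 ^ (m - 1 - i) : ℤ) : ℚ) := by
    rw [hS, Finset.mul_sum]
    refine Finset.sum_congr rfl fun i hi => ?_
    have hi' : i < m := Finset.mem_range.mp hi
    have hpow : m + 1 - i = (m - 1 - i) + 2 := by omega
    rw [hpow]
    push_cast
    ring
  have hs : I2 (∑ i ∈ range m, (2 * bernoulli i) * ((((m + 1).choose i : ℤ) * 2 ^ (m - 1 - i) : ℤ) : ℚ)) :=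
    I2_sum fun i _ => I2_mul (I2_two_bernoulli i) (I2_int _)
  set s := ∑ i ∈ range m, (2 * bernoulli i) * ((((m + 1).choose i : ℤ) * 2 ^ (m - 1 - i) : ℤ) : ℚ)
  -- t = (m+1)*B_m + s is 2-integral and 2*t = m+1
  have ht : I2 (((m : ℚ) + 1) * bernoulli m + s) :=
    I2_add (I2_mul (by simpa using I2_int ((m : ℤ) + 1)) hq) hs
  have h2t : 2 * (((m : ℚ) + 1) * bernoulli m + s) = (((m : ℤ) + 1 : ℤ) : ℚ) := by
    push_cast
    rw [hSdef] at hid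
    linarith [hid]
  have := two_dvd_den_of _ _ (by
    refine Int.odd_iff.mpr ?_
    have := Nat.even_iff.mp he
    omega) h2t
  rcases ht with ⟨k, hk⟩
  omega

lemma den_one_of_dvd {c : ℚ} {d : ℕ} (h : c.den ∣ d) : ((d : ℚ) * c).den = 1 := by
  obtain ⟨e, he⟩ := h
  have hd : (c.den : ℚ) ≠ 0 := by exact_mod_cast c.den_nz
  have h1 : (c.num : ℚ) = c * c.den := (div_eq_iff hd).mp (Rat.num_div_den c)
  have : ((d : ℚ)) * c = ((e * c.num : ℤ) : ℚ) := by
    subst he; push_cast [h1]; ring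
  rw [this, Rat.den_intCast]

lemma polyDenom_mem (f : Polynomial ℚ) :
    0 < polyDenom f ∧ IsIntPoly ((polyDenom f : ℚ) • f) := by
  have hne : (∏ i ∈ f.support, (f.coeff i).den) ∈ {d : ℕ | 0 < d ∧ IsIntPoly ((d : ℚ) • f)} := by
    constructor
    · exact Finset.prod_pos fun i _ => (f.coeff i).pos
    · intro i
      rw [Polynomial.coeff_smul, smul_eq_mul]
      by_cases hi : i ∈ f.support
      · exact den_one_of_dvd (Finset.dvd_prod_of_mem (fun j => (f.coeff j).den) hi)
      · rw [Polynomial.notMem_support_iff.mp hi, mul_zero]; rfl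
  exact Nat.sInf_mem ⟨_, hne⟩

lemma den_dvd_of_den_one {c : ℚ} {d : ℕ} (hd : 0 < d) (h : ((d : ℚ) * c).den = 1) : c.den ∣ d := by
  set z := ((d : ℚ) * c).num with hzdef
  have hz : ((d : ℚ) * c) = (z : ℚ) := by
    conv_lhs => rw [← Rat.num_div_den ((d : ℚ) * c)]
    rw [h]; simp; exact hzdef.symm
  have hd0 : (d : ℚ) ≠ 0 := by
    have : d ≠ 0 := by omega
    exact_mod_cast this
  have hc : c = Rat.divInt z (d : ℤ) := by
    rw [Rat.divInt_eq_div]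
    field_simp
    rw [mul_comm] at hz
    push_cast
    exact hz
  have hdd := Rat.den_dvd z (d : ℤ)
  rw [← hc] at hdd
  exact_mod_cast hdd

lemma bernoulli_poly_coeff_pred (n : ℕ) (hn : 1 ≤ n) :
    (Polynomial.bernoulli n).coeff (n - 1) = -(n : ℚ) / 2 := by
  rw [Polynomial.bernoulli, Polynomial.finset_sum_coeff]
  simp only [Polynomial.coeff_monomial]
  rw [Finset.sum_eq_single 1]
  · rw [if_pos rfl, bernoulli_one, Nat.choose_one_right]
    push_cast; ring
  · intro i hi hne
    have hi' : i < n + 1 := Finset.mem_range.mp hi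
    rw [if_neg]
    omega
  · intro h
    exact absurd (Finset.mem_range.mpr (by omega)) h

end StmtAux

/-- For `n ≥ 1`, `DB n` is even; in particular `B_n(x) ∉ ℤ[x]`. -/
theorem stmt_5 (n : ℕ) (hn : 1 ≤ n) :
    2 ∣ DB n ∧ ¬ IsIntPoly (Polynomial.bernoulli n) := by
  obtain ⟨i, hi⟩ : ∃ i, 2 ∣ ((Polynomial.bernoulli n).coeff i).den := by
    rcases Nat.even_or_odd n with he | ho
    · refine ⟨0, ?_⟩
      rw [Polynomial.coeff_zero_eq_eval_zero, Polynomial.bernoulli_eval_zero]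
      obtain ⟨k, hk⟩ := he
      exact two_dvd_den_bernoulli ⟨k, hk⟩ (by omega)
    · refine ⟨n - 1, ?_⟩
      rw [bernoulli_poly_coeff_pred n hn]
      refine two_dvd_den_of _ (-(n : ℤ)) ?_ (by push_cast; ring)
      obtain ⟨k, hk⟩ := ho
      exact ⟨-(k + 1), by push_cast; omega⟩
  constructor
  · obtain ⟨hpos, hint⟩ := polyDenom_mem (Polynomial.bernoulli n)
    have h1 := hint i
    rw [Polynomial.coeff_smul, smul_eq_mul] at h1
    exact dvd_trans hi (den_dvd_of_den_one hpos h1)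
  · intro hI
    have := hI i
    omega
end

section
/- Let n ≥ 1 be an integer. The derivative B'_n(x) of the n-th Bernoulli polynomial has only integral coefficients (B'_n(x) ∈ ℤ[x]) if and only if D̂_n = 1, which in turn holds if and only if DB_{n−1} = rad(n). Moreover, in these cases the number n+1 is prime. -/
namespace KS
open Nat Finset


/-- `d • q` is an integer iff the denominator divides `d`. -/
lemma den_nat_mul_eq_one_iff (d : ℕ) (q : ℚ) : ((d:ℚ) * q).den = 1 ↔ q.den ∣ d := by
  constructor
  · intro h
    have h2 : (((d:ℚ)*q).num : ℚ) = (d:ℚ) * q := (Rat.den_eq_one_iff _).1 h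
    set z := ((d:ℚ)*q).num
    have hq : (q.num : ℚ) / (q.den : ℚ) = q := Rat.num_div_den q
    have hden : (q.den : ℚ) ≠ 0 := by exact_mod_cast q.den_nz
    have : (z : ℚ) * q.den = (d:ℚ) * q.num := by
      rw [h2, mul_assoc, Rat.mul_den_eq_num]
    have hz : z * (q.den : ℤ) = (d : ℤ) * q.num := by exact_mod_cast this
    have hdvd : (q.den : ℤ) ∣ (d : ℤ) * q.num := ⟨z, by linarith [hz]⟩
    have : q.den ∣ d * q.num.natAbs := by
      have := Int.natAbs_dvd_natAbs.2 hdvd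
      simpa [Int.natAbs_mul] using this
    exact (Nat.Coprime.dvd_of_dvd_mul_right (Nat.Coprime.symm (q.reduced)) this)
  · rintro ⟨c, hc⟩
    have hden : (q.den : ℚ) ≠ 0 := by exact_mod_cast q.den_nz
    have : (d:ℚ) * q = ((q.num * c : ℤ) : ℚ) := by
      have : ((d : ℕ) : ℚ) = ((q.den : ℚ)) * (c : ℚ) := by exact_mod_cast congrArg (Nat.cast : ℕ → ℚ) hc
      rw [this]
      push_cast
      rw [mul_right_comm, mul_comm (q.den : ℚ) _, Rat.mul_den_eq_num, mul_comm]
    rw [this, Rat.den_intCast]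

variable {p : ℕ} [hp : Fact p.Prime]

lemma padicValInt_eq_zero_of_dvd_den {q : ℚ} (h : p ∣ q.den) : padicValInt p q.num = 0 := by
  have hnd : ¬ p ∣ q.num.natAbs := by
    intro hd
    have h1 : p ∣ Nat.gcd q.num.natAbs q.den := Nat.dvd_gcd hd h
    rw [q.reduced] at h1
    exact Nat.Prime.not_dvd_one hp.out h1
  exact padicValNat.eq_zero_of_not_dvd hnd

lemma pow_dvd_den_iff {q : ℚ} (hq : q ≠ 0) {k : ℕ} (hk : 1 ≤ k) :
    p ^ k ∣ q.den ↔ padicValRat p q ≤ -(k:ℤ) := by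
  rw [padicValRat_def]
  constructor
  · intro h
    have hpd : p ∣ q.den := dvd_trans (dvd_pow_self p (by omega : k ≠ 0)) h
    rw [padicValInt_eq_zero_of_dvd_den hpd]
    have := (padicValNat_dvd_iff (p := p) k q.den).1 h
    rcases this with h0 | hle
    · exact absurd h0 q.den_nz
    · simp; exact_mod_cast hle
  · intro h
    have hnum : 0 ≤ (padicValInt p q.num : ℤ) := Int.natCast_nonneg _
    have : (k : ℤ) ≤ (padicValNat p q.den : ℤ) := by omega
    exact (padicValNat_dvd_iff (p := p) k q.den).2 (Or.inr (by exact_mod_cast this))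

lemma dvd_den_iff {q : ℚ} (hq : q ≠ 0) : p ∣ q.den ↔ padicValRat p q ≤ -1 := by
  simpa using pow_dvd_den_iff (p := p) hq (le_refl 1)

lemma den_eq_one_of_val {q : ℚ} (hq : ∀ r : ℕ, r.Prime → ¬ r ∣ q.den) : q.den = 1 :=
  Nat.eq_one_iff_not_exists_prime_dvd.2 hq

/-- p-integrality predicate at level `c`. -/
def PI (p : ℕ) (c : ℤ) (q : ℚ) : Prop := q = 0 ∨ c ≤ padicValRat p q

lemma PI.zero (c : ℤ) : PI p c 0 := Or.inl rfl

lemma PI.mono {c c' : ℤ} {q : ℚ} (h : PI p c q) (hc : c' ≤ c) : PI p c' q :=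
  h.imp id fun h2 => le_trans hc h2

lemma PI.add {c : ℤ} {q r : ℚ} (h1 : PI p c q) (h2 : PI p c r) : PI p c (q + r) := by
  rcases h1 with h1 | h1
  · simpa [h1] using h2
  rcases h2 with h2 | h2
  · rw [h2, add_zero]; exact Or.inr h1
  by_cases h : q + r = 0
  · exact Or.inl h
  · exact Or.inr (le_trans (le_min h1 h2) (padicValRat.min_le_padicValRat_add h))

lemma PI.sum {c : ℤ} {s : Finset ℕ} {F : ℕ → ℚ} (h : ∀ i ∈ s, PI p c (F i)) :
    PI p c (∑ i ∈ s, F i) :=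
  Finset.sum_induction F (PI p c) (fun _ _ => PI.add) (PI.zero c) h

lemma PI.mul {c d : ℤ} {q r : ℚ} (h1 : PI p c q) (h2 : PI p d r) : PI p (c + d) (q * r) := by
  rcases h1 with h1 | h1
  · exact Or.inl (by simp [h1])
  rcases h2 with h2 | h2
  · exact Or.inl (by simp [h2])
  by_cases hq : q = 0
  · exact Or.inl (by simp [hq])
  by_cases hr : r = 0
  · exact Or.inl (by simp [hr])
  exact Or.inr (by rw [padicValRat.mul hq hr]; exact add_le_add h1 h2)

lemma PI.int (z : ℤ) : PI p 0 (z : ℚ) := by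
  by_cases hz : z = 0
  · exact Or.inl (by simp [hz])
  · exact Or.inr (by rw [@padicValRat.of_int p z]; exact Int.natCast_nonneg _)

lemma PI.nat (n : ℕ) : PI p 0 (n : ℚ) := by exact_mod_cast PI.int (p := p) (n : ℤ)

lemma PI.neg {c : ℤ} {q : ℚ} (h : PI p c q) : PI p c (-q) := by
  rcases h with h | h
  · exact Or.inl (by simp [h])
  · exact Or.inr (by rwa [padicValRat.neg])

lemma PI.sub {c : ℤ} {q r : ℚ} (h1 : PI p c q) (h2 : PI p c r) : PI p c (q - r) := by
  rw [sub_eq_add_neg]; exact h1.add h2.neg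

lemma PI.nat_dvd {n : ℕ} {k : ℕ} (h : p ^ k ∣ n) : PI p k (n : ℚ) := by
  by_cases hn : n = 0
  · exact Or.inl (by simp [hn])
  · refine Or.inr ?_
    rw [@padicValRat.of_nat]
    exact_mod_cast (padicValNat_dvd_iff (p := p) k n).1 h |>.resolve_left hn

noncomputable def polyLcm (f : Polynomial ℚ) : ℕ := f.support.lcm fun i => (f.coeff i).den

lemma polyLcm_pos (f : Polynomial ℚ) : 0 < polyLcm f := by
  rw [Nat.pos_iff_ne_zero, Ne, polyLcm, Finset.lcm_eq_zero_iff]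
  intro h
  rcases h with ⟨i, _, h2⟩
  exact (Rat.den_nz _) h2

lemma den_dvd_polyLcm (f : Polynomial ℚ) (i : ℕ) : (f.coeff i).den ∣ polyLcm f := by
  by_cases h : i ∈ f.support
  · exact Finset.dvd_lcm h
  · rw [Polynomial.notMem_support_iff.1 h]; simp

lemma isIntPoly_nat_smul_iff (d : ℕ) (f : Polynomial ℚ) :
    IsIntPoly ((d : ℚ) • f) ↔ polyLcm f ∣ d := by
  unfold IsIntPoly
  rw [polyLcm, Finset.lcm_dvd_iff]
  constructor
  · intro h i hi
    have := h i
    rw [Polynomial.coeff_smul, smul_eq_mul, den_nat_mul_eq_one_iff] at this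
    exact this
  · intro h i
    rw [Polynomial.coeff_smul, smul_eq_mul, den_nat_mul_eq_one_iff]
    by_cases hi : i ∈ f.support
    · exact h i hi
    · rw [Polynomial.notMem_support_iff.1 hi]; simp

lemma polyDenom_eq (f : Polynomial ℚ) : polyDenom f = polyLcm f := by
  apply le_antisymm
  · exact Nat.sInf_le ⟨polyLcm_pos f, (isIntPoly_nat_smul_iff _ f).2 dvd_rfl⟩
  · have hmem := Nat.sInf_mem (⟨polyLcm f, polyLcm_pos f, (isIntPoly_nat_smul_iff _ f).2 dvd_rfl⟩ :
      Set.Nonempty {d : ℕ | 0 < d ∧ IsIntPoly ((d : ℚ) • f)})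
    rcases hmem with ⟨hd, h⟩
    exact Nat.le_of_dvd hd ((isIntPoly_nat_smul_iff _ f).1 h)

lemma isIntPoly_smul_iff_polyDenom_dvd (d : ℕ) (f : Polynomial ℚ) :
    IsIntPoly ((d : ℚ) • f) ↔ polyDenom f ∣ d := by
  rw [polyDenom_eq, isIntPoly_nat_smul_iff]

lemma prime_dvd_polyLcm_iff {p : ℕ} (hp : p.Prime) (f : Polynomial ℚ) :
    p ∣ polyLcm f ↔ ∃ i, p ∣ (f.coeff i).den := by
  constructor
  · intro h
    have hdvd : polyLcm f ∣ ∏ i ∈ f.support, (f.coeff i).den :=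
      Finset.lcm_dvd fun b hb => Finset.dvd_prod_of_mem _ hb
    have := hp.prime.dvd_finset_prod_iff (fun i => (f.coeff i).den) |>.1 (dvd_trans h hdvd)
    rcases this with ⟨i, _, h2⟩
    exact ⟨i, h2⟩
  · rintro ⟨i, h⟩
    exact dvd_trans h (den_dvd_polyLcm f i)

-- ### digits

lemma sd_eq {p : ℕ} (hp : 2 ≤ p) {n : ℕ} (hn : n ≠ 0) : sd p n = n % p + sd p (n / p) := by
  unfold sd
  rw [Nat.digits_def' hp (Nat.pos_of_ne_zero hn), List.sum_cons]

lemma sd_eq_zero_iff {p : ℕ} (hp : 2 ≤ p) {n : ℕ} : sd p n = 0 ↔ n = 0 := by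
  constructor
  · intro h
    by_contra hn
    induction n using Nat.strong_induction_on with
    | _ n ih =>
      rw [sd_eq hp hn] at h
      have h1 : n % p = 0 := by omega
      have h2 : sd p (n / p) = 0 := by omega
      have hnp : n / p ≠ 0 := by
        intro h3
        have := Nat.mod_add_div n p
        rw [h3, Nat.mul_zero] at this
        omega
      exact ih (n / p) (Nat.div_lt_self (Nat.pos_of_ne_zero hn) (by omega)) h2 hnp
  · intro h; simp [h, sd]

lemma sd_pos {p : ℕ} (hp : 2 ≤ p) {n : ℕ} (hn : n ≠ 0) : 1 ≤ sd p n := by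
  rcases Nat.eq_zero_or_pos (sd p n) with h | h
  · exact absurd ((sd_eq_zero_iff hp).1 h) hn
  · exact h

lemma sd_le (p n : ℕ) : sd p n ≤ n := Nat.digit_sum_le p n

/-- digit sum of `n-1` when `p ∤ n`. -/
lemma sd_pred {p : ℕ} (hp : 2 ≤ p) {n : ℕ} (hn : n ≠ 0) (hpn : ¬ p ∣ n) :
    sd p (n - 1) = sd p n - 1 ∧ 1 ≤ sd p n := by
  have hr : 1 ≤ n % p := by
    rcases Nat.eq_zero_or_pos (n % p) with h | h
    · exact absurd (Nat.dvd_of_mod_eq_zero h) hpn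
    · exact h
  have key : n - 1 = p * (n / p) + (n % p - 1) := by
    have := Nat.mod_add_div n p; omega
  have hsd := sd_eq hp hn
  constructor
  · by_cases h0 : n - 1 = 0
    · have hn1 : n = 1 := by omega
      subst hn1
      have h1 : sd p 1 = 1 := by
        rw [sd_eq hp one_ne_zero, Nat.mod_eq_of_lt (by omega), Nat.div_eq_of_lt (by omega)]
        simp [sd]
      have h0' : sd p 0 = 0 := by simp [sd]
      show sd p (1-1) = sd p 1 - 1
      rw [h1]
      simpa using h0'
    · rw [sd_eq hp h0]
      have hlt : n % p - 1 < p := by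
        have := Nat.mod_lt n (y := p) (by omega)
        omega
      have hmod : (n - 1) % p = n % p - 1 := by
        rw [key, Nat.mul_add_mod, Nat.mod_eq_of_lt hlt]
      have hdiv : (n - 1) / p = n / p := by
        rw [key, Nat.mul_add_div (by omega), Nat.div_eq_of_lt (a := n % p - 1) hlt, Nat.add_zero]
      rw [hmod, hdiv]; omega
  · omega

-- new material:

lemma sd_zero (p : ℕ) : sd p 0 = 0 := by simp [sd]

lemma sd_small {p : ℕ} (hp : 2 ≤ p) {m : ℕ} (hm : m < p) : sd p m = m := by
  by_cases h : m = 0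
  · simp [h, sd]
  · rw [sd_eq hp h, Nat.mod_eq_of_lt hm, Nat.div_eq_of_lt hm, sd_zero, Nat.add_zero]

lemma sd_mul_p {p : ℕ} (hp : 2 ≤ p) (x : ℕ) : sd p (p * x) = sd p x := by
  by_cases h : x = 0
  · simp [h, sd]
  · rw [sd_eq hp (by positivity), Nat.mul_mod_right, Nat.mul_div_cancel_left _ (by omega : 0 < p), Nat.zero_add]

lemma sd_modEq {p : ℕ} (hp : 2 ≤ p) (n : ℕ) : n ≡ sd p n [MOD (p - 1)] := by
  rcases Nat.lt_or_ge p 3 with h | h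
  · have hp2 : p = 2 := by omega
    subst hp2
    simpa using (Nat.modEq_one : n ≡ sd 2 n [MOD 1])
  · refine Nat.modEq_digits_sum (p - 1) p ?_ n
    have hpp : p - 1 + 1 = p := by omega
    have h2 := Nat.add_mod_left (p - 1) 1
    rw [hpp] at h2
    rw [h2, Nat.mod_eq_of_lt (by omega)]

lemma sd_modEq_two {p : ℕ} (hp : p % 2 = 1) (n : ℕ) : n ≡ sd p n [MOD 2] :=
  Nat.modEq_digits_sum 2 p hp n

lemma exists_subdigits {p : ℕ} (hp : 2 ≤ p) : ∀ N t, t ≤ sd p N →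
    ∃ m, m ≤ N ∧ sd p m = t ∧ sd p m + sd p (N - m) = sd p N := by
  intro N
  induction N using Nat.strong_induction_on with
  | _ N ih =>
    intro t ht
    by_cases hN : N = 0
    · subst hN
      have ht0 : t = 0 := by simpa [sd_zero] using ht
      exact ⟨0, le_refl _, by simp [sd_zero, ht0], by simp [sd_zero]⟩
    set r := N % p with hr
    set q := N / p with hq
    have hNrq : N = p * q + r := by
      have h0 := Nat.mod_add_div N p
      rw [← hr, ← hq] at h0
      omega
    have hrp : r < p := Nat.mod_lt _ (by omega)
    have hrN : r ≤ N := Nat.mod_le N p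
    have hsdN : sd p N = r + sd p q := sd_eq hp hN
    rcases le_or_gt t r with hcase | hcase
    · -- m = t
      refine ⟨t, by omega, sd_small hp (by omega), ?_⟩
      rw [sd_small hp (by omega)]
      by_cases hNt : N - t = 0
      · have : N = t := by omega
        subst this
        rw [Nat.sub_self, sd_zero, Nat.add_zero, sd_small hp (by omega)]
      · have key : N - t = p * q + (r - t) := by omega
        have hlt : r - t < p := by omega
        rw [key, sd_eq hp (by omega), Nat.mul_add_mod, Nat.mod_eq_of_lt hlt,
          Nat.mul_add_div (by omega), Nat.div_eq_of_lt (a := r - t) hlt, Nat.add_zero]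
        omega
    · -- recurse on q
      have hqN : q < N := Nat.div_lt_self (by omega) (by omega)
      have htq : t - r ≤ sd p q := by omega
      obtain ⟨m', hm'le, hm'sd, hm'add⟩ := ih q hqN (t - r) htq
      have hm'0 : m' ≠ 0 := by intro h0; rw [h0, sd_zero] at hm'sd; omega
      have hm'pos : 0 < p * m' := Nat.mul_pos (by omega) (Nat.pos_of_ne_zero hm'0)
      have hqsplit : p * q = p * m' + p * (q - m') := by
        have hq2 : q = m' + (q - m') := by omega
        calc p * q = p * (m' + (q - m')) := by rw [← hq2]
        _ = p * m' + p * (q - m') := by ring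
      have hmle : r + p * m' ≤ N := by omega
      have hsdm : sd p (r + p * m') = t := by
        rw [show r + p * m' = p * m' + r by ring, sd_eq hp (by omega),
          Nat.mul_add_mod, Nat.mod_eq_of_lt hrp, Nat.mul_add_div (by omega),
          Nat.div_eq_of_lt (a := r) hrp, Nat.add_zero, hm'sd]
        omega
      have hsub : N - (r + p * m') = p * (q - m') := by omega
      refine ⟨r + p * m', hmle, hsdm, ?_⟩
      rw [hsdm, hsub, sd_mul_p hp]
      omega
section
variable {p : ℕ} [hp : Fact p.Prime]
-- new:
lemma bernoulli_odd (m : ℕ) (h1 : m % 2 = 1) (h3 : 3 ≤ m) : _root_.bernoulli m = 0 := by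
  rw [bernoulli_eq_bernoulli'_of_ne_one (by omega)]
  exact bernoulli'_eq_zero_of_odd (Nat.odd_iff.2 h1) (by omega)

lemma padicValNat_le_sub_one {j : ℕ} (hj : 1 ≤ j) : padicValNat p j ≤ j - 1 := by
  have h1 : p ^ (padicValNat p j) ∣ j := pow_padicValNat_dvd
  have h2 : p ^ (padicValNat p j) ≤ j := Nat.le_of_dvd (by omega) h1
  have h3 : 2 ^ (padicValNat p j) ≤ p ^ (padicValNat p j) :=
    Nat.pow_le_pow_left hp.out.two_le _
  have h4 : padicValNat p j < 2 ^ (padicValNat p j) := Nat.lt_two_pow_self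
  omega

lemma add_two_le_two_pow {v : ℕ} (h : 2 ≤ v) : v + 2 ≤ 2 ^ v := by
  induction v with
  | zero => omega
  | succ n ihn =>
    rcases Nat.lt_or_ge n 2 with h2 | h2
    · interval_cases n
      · omega
      · norm_num
    · have := ihn h2
      have h5 : 1 ≤ 2 ^ n := Nat.one_le_two_pow
      rw [pow_succ]
      omega

lemma padicValNat_le_sub_two {j : ℕ} (hj : 3 ≤ j) : padicValNat p j ≤ j - 2 := by
  have h1 : p ^ (padicValNat p j) ∣ j := pow_padicValNat_dvd
  have h2 : p ^ (padicValNat p j) ≤ j := Nat.le_of_dvd (by omega) h1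
  rcases Nat.lt_or_ge (padicValNat p j) 2 with h | h
  · omega
  · have h3 : 2 ^ padicValNat p j ≤ p ^ padicValNat p j := Nat.pow_le_pow_left hp.out.two_le _
    have h4 := add_two_le_two_pow h
    omega

lemma PI.inv_nat (j : ℕ) (hj : j ≠ 0) : PI p (-(padicValNat p j : ℤ)) (((j:ℚ))⁻¹) := by
  refine Or.inr ?_
  rw [padicValRat.inv, padicValRat.of_nat]

lemma PI.p_inv : PI p (-1) (((p:ℚ))⁻¹) := by
  refine Or.inr ?_
  rw [padicValRat.inv, padicValRat.self hp.out.one_lt]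

/-- sum of m-th powers of 0..p-1 -/
def Tnat (p m : ℕ) : ℕ := ∑ k ∈ range p, k ^ m

lemma Tnat_cast (m : ℕ) : ((Tnat p m : ℚ)) = ∑ k ∈ range p, ((k:ℚ)) ^ m := by
  unfold Tnat; push_cast; rfl

/-- The key identity from `sum_range_pow`. -/
lemma key_identity (m : ℕ) :
    (p:ℚ) * _root_.bernoulli m = (Tnat p m : ℚ) -
      ∑ i ∈ range m, _root_.bernoulli i * ((m+1).choose i) * (p:ℚ)^(m+1-i) / (m+1) := by
  have h := sum_range_pow p m
  rw [Finset.sum_range_succ] at h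
  have hm1 : ((m:ℚ)+1) ≠ 0 := by positivity
  have hlast : _root_.bernoulli m * (((m+1).choose m : ℕ) : ℚ) * (p:ℚ)^(m+1-m) / ((m:ℚ)+1)
      = (p:ℚ) * _root_.bernoulli m := by
    rw [show m+1-m = 1 by omega, Nat.choose_succ_self_right, pow_one]
    field_simp
    push_cast
    ring
  rw [hlast] at h
  rw [Tnat_cast, h]
  ring

/-- Each term in the remainder sum, rewritten. -/
lemma term_eq (m i : ℕ) (hi : i < m) :
    _root_.bernoulli i * ((m+1).choose i) * (p:ℚ)^(m+1-i) / (m+1) =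
    _root_.bernoulli i * ((m.choose i)) * (p:ℚ)^(m+1-i) * ((m+1-i : ℕ) : ℚ)⁻¹ := by
  have hnat : (m+1).choose i * (m + 1 - i) = m.choose i * (m+1) := (Nat.choose_mul_succ_eq m i).symm
  have hcast : ((m+1).choose i : ℚ) * ((m + 1 - i : ℕ) : ℚ) = (m.choose i : ℚ) * ((m:ℚ)+1) := by
    exact_mod_cast congrArg (Nat.cast : ℕ → ℚ) hnat
  have h1 : ((m + 1 - i : ℕ) : ℚ) ≠ 0 := by
    have : 0 < m + 1 - i := by omega
    exact_mod_cast Nat.pos_iff_ne_zero.1 this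
  have h2 : ((m:ℚ)+1) ≠ 0 := by positivity
  field_simp
  linear_combination (_root_.bernoulli i * (p:ℚ)^(m+1-i)) * hcast

/-- R1: the valuation of any Bernoulli number is at least -1. -/
lemma bernoulli_val_ge (m : ℕ) : PI p (-1) (_root_.bernoulli m) := by
  induction m using Nat.strong_induction_on with
  | _ m ih =>
    have hkey := key_identity (p := p) m
    have hR : PI p 0 (∑ i ∈ range m, _root_.bernoulli i * ((m+1).choose i) * (p:ℚ)^(m+1-i) / (m+1)) := by
      apply PI.sum
      intro i hi
      rw [Finset.mem_range] at hi
      rw [term_eq m i hi]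
      have hj : 1 ≤ m + 1 - i := by omega
      have hv := padicValNat_le_sub_one (p := p) (j := m + 1 - i) hj
      have h1 : PI p (-1 + 0 + ((m+1-i : ℕ) : ℤ) + (-(padicValNat p (m+1-i) : ℤ)))
          (_root_.bernoulli i * ((m.choose i)) * (p:ℚ)^(m+1-i) * ((m+1-i : ℕ) : ℚ)⁻¹) := by
        refine PI.mul (PI.mul (PI.mul (ih i hi) (PI.nat _)) ?_) ((PI.inv_nat _ (by omega)).mono (le_refl _))
        have hcast : ((p:ℚ))^(m+1-i) = (((p^(m+1-i) : ℕ)) : ℚ) := by push_cast; ring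
        rw [hcast]
        exact PI.nat_dvd (p := p) (dvd_refl _)
      refine h1.mono ?_
      omega
    have hT : PI p 0 ((Tnat p m : ℚ)) := PI.nat _
    have hPB : PI p 0 ((p:ℚ) * _root_.bernoulli m) := by rw [hkey]; exact hT.sub hR
    have : _root_.bernoulli m = ((p:ℚ))⁻¹ * ((p:ℚ) * _root_.bernoulli m) := by
      have hp0 : (p:ℚ) ≠ 0 := by exact_mod_cast hp.out.ne_zero
      field_simp
    rw [this]
    exact (PI.p_inv.mul hPB).mono (by omega)
end

section
variable {p : ℕ} [hp : Fact p.Prime]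

lemma core_even {m : ℕ} (hm : 4 ≤ m) (heven : m % 2 = 0) :
    PI p 1 ((p:ℚ) * _root_.bernoulli m - (Tnat p m : ℚ)) := by
  have hkey := key_identity (p := p) m
  have heq : (p:ℚ) * _root_.bernoulli m - (Tnat p m : ℚ) =
      -(∑ i ∈ range m, _root_.bernoulli i * ((m+1).choose i) * (p:ℚ)^(m+1-i) / (m+1)) := by
    rw [hkey]; ring
  rw [heq]
  refine PI.neg (PI.sum ?_)
  intro i hi
  rw [Finset.mem_range] at hi
  by_cases hB : _root_.bernoulli i = 0
  · rw [hB]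
    exact Or.inl (by ring)
  by_cases him : i = m - 1
  · exact absurd (bernoulli_odd i (by omega) (by omega)) hB
  · have hj3 : 3 ≤ m + 1 - i := by omega
    rw [term_eq m i hi]
    have hv := padicValNat_le_sub_two (p := p) (j := m + 1 - i) hj3
    have h1 : PI p (-1 + 0 + ((m+1-i : ℕ) : ℤ) + (-(padicValNat p (m+1-i) : ℤ)))
        (_root_.bernoulli i * ((m.choose i)) * (p:ℚ)^(m+1-i) * ((m+1-i : ℕ) : ℚ)⁻¹) := by
      refine PI.mul (PI.mul (PI.mul (bernoulli_val_ge i) (PI.nat _)) ?_)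
        ((PI.inv_nat _ (by omega)).mono (le_refl _))
      have hcast : ((p:ℚ))^(m+1-i) = (((p^(m+1-i) : ℕ)) : ℚ) := by push_cast; ring
      rw [hcast]
      exact PI.nat_dvd (p := p) (dvd_refl _)
    refine h1.mono ?_
    omega

lemma zmod_cast_Tnat (m : ℕ) : ((Tnat p m : ℕ) : ZMod p) = ∑ x : ZMod p, x ^ m := by
  unfold Tnat
  push_cast
  refine Finset.sum_bij (fun k _ => ((k : ZMod p))) (fun _ _ => Finset.mem_univ _) ?_ ?_ ?_
  · intro a ha b hb hab
    rw [Finset.mem_range] at ha hb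
    have := congrArg ZMod.val hab
    rwa [ZMod.val_cast_of_lt ha, ZMod.val_cast_of_lt hb] at this
  · intro x _
    exact ⟨x.val, Finset.mem_range.2 (ZMod.val_lt x), ZMod.natCast_rightInverse x⟩
  · intro k _; rfl

lemma sum_pow_zmod (m : ℕ) (hm : 1 ≤ m) :
    ∑ x : ZMod p, x ^ m = if (p - 1) ∣ m then (-1 : ZMod p) else 0 := by
  classical
  have hcard : Fintype.card (ZMod p) = p := ZMod.card p
  have h1 : ∑ x : ZMod p, x ^ m = ∑ x ∈ Finset.univ \ {(0 : ZMod p)}, x ^ m := by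
    rw [← Finset.sum_sdiff (({0} : Finset (ZMod p)).subset_univ), Finset.sum_singleton,
      zero_pow (by omega), add_zero]
  have h2 : ∑ x ∈ Finset.univ \ {(0 : ZMod p)}, x ^ m = ∑ x : (ZMod p)ˣ, ((x : ZMod p)) ^ m := by
    have huniv : Finset.univ.map (⟨fun x => (x : ZMod p), Units.val_injective⟩ : (ZMod p)ˣ ↪ ZMod p)
        = Finset.univ \ {0} := by
      ext x
      simp only [Finset.mem_map, Finset.mem_univ, Function.Embedding.coeFn_mk, true_and,
        Finset.mem_sdiff, Finset.mem_singleton]; exact isUnit_iff_ne_zero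
    rw [← huniv, Finset.sum_map]
    rfl
  rw [h1, h2, FiniteField.sum_pow_units, hcard]

lemma Tnat_mod_dvd (m : ℕ) (hm : 1 ≤ m) (h : (p - 1) ∣ m) : p ∣ (Tnat p m + 1) := by
  have := zmod_cast_Tnat (p := p) m
  rw [sum_pow_zmod m hm, if_pos h] at this
  have h2 : ((Tnat p m + 1 : ℕ) : ZMod p) = 0 := by push_cast [this]; ring
  exact (ZMod.natCast_eq_zero_iff _ _).1 h2

lemma Tnat_mod_not_dvd (m : ℕ) (hm : 1 ≤ m) (h : ¬ (p - 1) ∣ m) : p ∣ Tnat p m := by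
  have := zmod_cast_Tnat (p := p) m
  rw [sum_pow_zmod m hm, if_neg h] at this
  exact (ZMod.natCast_eq_zero_iff _ _).1 this

end
section
variable {p : ℕ} [hp : Fact p.Prime]
-- new:
lemma val_cast_p_ne_zero : ((p : ℚ)) ≠ 0 := by exact_mod_cast hp.out.ne_zero

lemma val_of_p_mul {B : ℚ} (hB : B ≠ 0) (h : padicValRat p ((p:ℚ) * B) = 0) :
    padicValRat p B = -1 := by
  rw [padicValRat.mul val_cast_p_ne_zero hB, padicValRat.self hp.out.one_lt] at h
  omega

lemma val_inv_nat_eq (a : ℕ) : padicValRat p (((a:ℚ))⁻¹) = -(padicValNat p a : ℤ) := by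
  rw [padicValRat.inv, padicValRat.of_nat]

lemma padicValNat_two_six : padicValNat 2 6 = 1 := by
  have h6 : (6:ℕ) = 2 * 3 := by norm_num
  rw [h6, padicValNat.mul (by norm_num) (by norm_num),
    padicValNat.self (by norm_num), padicValNat.eq_zero_of_not_dvd (by norm_num)]

lemma padicValNat_three_six : padicValNat 3 6 = 1 := by
  have h6 : (6:ℕ) = 3 * 2 := by norm_num
  rw [h6, padicValNat.mul (by norm_num) (by norm_num),
    padicValNat.self (by norm_num), padicValNat.eq_zero_of_not_dvd (by norm_num)]

lemma padicValNat_six_other (h2 : p ≠ 2) (h3 : p ≠ 3) : padicValNat p 6 = 0 := by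
  refine padicValNat.eq_zero_of_not_dvd ?_
  intro hdvd
  have hle : p ≤ 6 := Nat.le_of_dvd (by norm_num) hdvd
  have hge := hp.out.two_le
  have hprime := hp.out
  interval_cases p <;> first | omega | exact absurd hprime (by decide)

lemma bernoulli_two_eq : _root_.bernoulli 2 = (((6:ℕ):ℚ))⁻¹ := by
  norm_num [_root_.bernoulli, bernoulli'_two]

lemma bernoulli_one_eq : _root_.bernoulli 1 = -(((2:ℕ):ℚ))⁻¹ := by
  rw [bernoulli_one]; norm_num

/-- R2: von Staudt–Clausen, divisibility case. -/
lemma bernoulli_val_eq_neg_one {m : ℕ} (hm : 1 ≤ m) (hpar : m % 2 = 0 ∨ m = 1)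
    (hdvd : (p - 1) ∣ m) :
    _root_.bernoulli m ≠ 0 ∧ padicValRat p (_root_.bernoulli m) = -1 := by
  have hp2 := hp.out.two_le
  by_cases hm1 : m = 1
  · subst hm1
    have hpeq : p = 2 := by
      have := Nat.le_of_dvd (by omega) hdvd
      omega
    subst hpeq
    refine ⟨by rw [bernoulli_one_eq]; norm_num, ?_⟩
    rw [bernoulli_one_eq, padicValRat.neg, val_inv_nat_eq, padicValNat.self (by norm_num)]
    rfl
  by_cases hm2 : m = 2
  · subst hm2
    have hpeq : p = 2 ∨ p = 3 := by
      have h1 := Nat.le_of_dvd (by omega) hdvd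
      have h2 := hp.out.two_le
      omega
    refine ⟨by rw [bernoulli_two_eq]; norm_num, ?_⟩
    rw [bernoulli_two_eq, val_inv_nat_eq]
    rcases hpeq with h | h <;> subst h
    · rw [padicValNat_two_six]; rfl
    · rw [padicValNat_three_six]; rfl
  -- main case m even ≥ 4
  have hm4 : 4 ≤ m := by omega
  have heven : m % 2 = 0 := by omega
  have hcore := core_even (p := p) hm4 heven
  have hT1 : PI p 1 ((Tnat p m : ℚ) + 1) := by
    have hd := Tnat_mod_dvd (p := p) m hm hdvd
    have h1 : PI p ((1:ℕ) : ℤ) (((Tnat p m + 1 : ℕ) : ℚ)) := PI.nat_dvd (by simpa using hd)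
    have h2 : (((Tnat p m + 1 : ℕ) : ℚ)) = (Tnat p m : ℚ) + 1 := by push_cast; ring
    rw [h2] at h1
    exact h1
  have hsum : PI p 1 ((p:ℚ) * _root_.bernoulli m + 1) := by
    have h := hcore.add hT1
    have he : ((p:ℚ) * _root_.bernoulli m - (Tnat p m : ℚ)) + ((Tnat p m : ℚ) + 1)
        = (p:ℚ) * _root_.bernoulli m + 1 := by ring
    rwa [he] at h
  have hvneg1 : padicValRat p (-1 : ℚ) = 0 := by
    rw [padicValRat.neg, padicValRat.one]
  rcases hsum with h0 | h1
  · -- pB = −1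
    have hpB : (p:ℚ) * _root_.bernoulli m = -1 := by linarith [h0]
    have hBne : _root_.bernoulli m ≠ 0 := by
      intro h
      rw [h, mul_zero] at hpB
      norm_num at hpB
    refine ⟨hBne, val_of_p_mul hBne ?_⟩
    rw [hpB, hvneg1]
  · -- v(pB+1) ≥ 1
    have hne1 : ((p:ℚ) * _root_.bernoulli m + 1) ≠ 0 := by
      intro h
      rw [h] at h1
      rw [padicValRat.zero] at h1
      omega
    have hpBne : (p:ℚ) * _root_.bernoulli m ≠ 0 := by
      intro h
      rw [h, zero_add] at h1
      rw [padicValRat.one] at h1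
      omega
    have hBne : _root_.bernoulli m ≠ 0 := by
      intro h
      rw [h, mul_zero] at hpBne
      exact hpBne rfl
    refine ⟨hBne, val_of_p_mul hBne ?_⟩
    have heq2 : (-1 : ℚ) + ((p:ℚ) * _root_.bernoulli m + 1) = (p:ℚ) * _root_.bernoulli m := by ring
    have := padicValRat.add_eq_of_lt (p := p) (q := (-1:ℚ)) (r := (p:ℚ) * _root_.bernoulli m + 1)
      (by rw [heq2]; exact hpBne) (by norm_num) hne1 (by rw [hvneg1]; omega)
    rw [heq2] at this
    rw [this, hvneg1]

/-- R3: von Staudt–Clausen, non-divisibility case. -/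
lemma bernoulli_val_nonneg {m : ℕ} (hm : 1 ≤ m) (hdvd : ¬ (p - 1) ∣ m) :
    PI p 0 (_root_.bernoulli m) := by
  have hp2 := hp.out.two_le
  have hpne2 : p ≠ 2 := by
    intro h
    subst h
    exact hdvd (one_dvd m)
  by_cases hm1 : m = 1
  · subst hm1
    refine Or.inr ?_
    rw [bernoulli_one_eq, padicValRat.neg, val_inv_nat_eq,
      padicValNat.eq_zero_of_not_dvd (by intro h; have := Nat.le_of_dvd (by norm_num) h; interval_cases p <;> simp_all)]
    rfl
  by_cases hm2 : m = 2
  · subst hm2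
    have hpne3 : p ≠ 3 := by
      intro h
      subst h
      exact hdvd (by norm_num)
    refine Or.inr ?_
    rw [bernoulli_two_eq, val_inv_nat_eq, padicValNat_six_other hpne2 hpne3]
    rfl
  by_cases hodd : m % 2 = 1
  · exact Or.inl (bernoulli_odd m hodd (by omega))
  -- m even ≥ 4
  have hm4 : 4 ≤ m := by omega
  have hcore := core_even (p := p) hm4 (by omega)
  have hT : PI p 1 ((Tnat p m : ℚ)) := by
    have hd := Tnat_mod_not_dvd (p := p) m hm hdvd
    exact PI.nat_dvd (k := 1) (by simpa using hd)
  have hpB : PI p 1 ((p:ℚ) * _root_.bernoulli m) := by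
    have h := hcore.add hT
    have he : ((p:ℚ) * _root_.bernoulli m - (Tnat p m : ℚ)) + (Tnat p m : ℚ)
        = (p:ℚ) * _root_.bernoulli m := by ring
    rwa [he] at h
  have heq : _root_.bernoulli m = ((p:ℚ))⁻¹ * ((p:ℚ) * _root_.bernoulli m) := by
    field_simp
  rw [heq]
  exact (PI.p_inv.mul hpB).mono (by omega)
end
-- ============ NEW MATERIAL ============
section
lemma sd_eq_one_cases {p m : ℕ} (hp2 : 2 ≤ p) (h : sd p m = 1) : m = 1 ∨ p ∣ m := by
  have hm0 : m ≠ 0 := by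
    intro h0
    rw [h0, sd_zero] at h
    omega
  rw [sd_eq hp2 hm0] at h
  rcases Nat.eq_zero_or_pos (m % p) with h1 | h1
  · exact Or.inr (Nat.dvd_of_mod_eq_zero h1)
  · have h2 : sd p (m / p) = 0 := by omega
    have h3 : m / p = 0 := by
      by_contra h4
      have := sd_pos hp2 h4
      omega
    left
    have := Nat.mod_add_div m p
    rw [h3, Nat.mul_zero] at this
    omega

lemma sub_one_dvd_sd {p m : ℕ} (hp2 : 2 ≤ p) (hdvd : (p - 1) ∣ m) : (p - 1) ∣ sd p m := by
  have h1 := sd_modEq hp2 m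
  have h2 : m ≡ 0 [MOD (p-1)] := (Nat.modEq_zero_iff_dvd).2 hdvd
  exact (Nat.modEq_zero_iff_dvd).1 (h1.symm.trans h2)

lemma coeff_bernoulli {N k : ℕ} (h : k ≤ N) :
    (Polynomial.bernoulli N).coeff k = _root_.bernoulli (N - k) * (N.choose k) := by
  rw [Polynomial.bernoulli_def, Polynomial.finset_sum_coeff]
  rw [Finset.sum_eq_single k]
  · rw [Polynomial.coeff_monomial, if_pos rfl]
  · intro i _ hik
    rw [Polynomial.coeff_monomial, if_neg hik]
  · intro hk
    exact absurd (Finset.mem_range.2 (by omega)) hk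

lemma coeff_bernoulli_high {N k : ℕ} (h : N < k) : (Polynomial.bernoulli N).coeff k = 0 := by
  rw [Polynomial.bernoulli_def, Polynomial.finset_sum_coeff]
  apply Finset.sum_eq_zero
  intro i hi
  rw [Finset.mem_range] at hi
  rw [Polynomial.coeff_monomial, if_neg (by omega)]

variable {p : ℕ} [hp : Fact p.Prime]

lemma choose_not_dvd {N k : ℕ} (hk : k ≤ N) (hs : sd p k + sd p (N - k) = sd p N) :
    ¬ p ∣ N.choose k := by
  have hid := sub_one_mul_padicValNat_choose_eq_sub_sum_digits (p := p) hk
  have hv : (p - 1) * padicValNat p (N.choose k) = 0 := by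
    rw [hid]
    show sd p k + sd p (N - k) - sd p N = 0
    omega
  have hp2 := hp.out.two_le
  have hv0 : padicValNat p (N.choose k) = 0 := by
    rcases Nat.mul_eq_zero.1 hv with h | h
    · omega
    · exact h
  intro hdvd
  have hne : N.choose k ≠ 0 := (Nat.choose_pos hk).ne'
  rcases (padicValNat_dvd_iff (p := p) 1 (N.choose k)).1 (by simpa using hdvd) with h | h
  · exact hne h
  · omega

lemma sd_le_of_not_dvd {N k : ℕ} (hk : k ≤ N) (hnd : ¬ p ∣ N.choose k) :
    sd p k + sd p (N - k) ≤ sd p N := by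
  have hv0 : padicValNat p (N.choose k) = 0 := padicValNat.eq_zero_of_not_dvd hnd
  have hid := sub_one_mul_padicValNat_choose_eq_sub_sum_digits (p := p) hk
  rw [hv0, Nat.mul_zero] at hid
  have h0 : sd p k + sd p (N - k) - sd p N = 0 := hid.symm
  omega


/-- Lemma A: if `p ∤ n` and `sd p n < p` then every coefficient of `B_{n-1}(x)` is `p`-integral. -/
lemma coeff_val_nonneg {n : ℕ} (hn : 1 ≤ n) (hpn : ¬ p ∣ n) (hsd : sd p n < p) (k : ℕ) :
    PI p 0 ((Polynomial.bernoulli (n-1)).coeff k) := by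
  have hp2 := hp.out.two_le
  rcases Nat.lt_or_ge (n-1) k with h | h
  · rw [coeff_bernoulli_high h]; exact Or.inl rfl
  rw [coeff_bernoulli h]
  by_cases hm0 : n - 1 - k = 0
  · rw [hm0, bernoulli_zero, one_mul]
    exact PI.nat _
  by_cases hdvd : (p - 1) ∣ (n - 1 - k)
  · have hchoose : p ∣ (n-1).choose k := by
      by_contra hnd
      have hle := sd_le_of_not_dvd (p := p) h hnd
      have h1 : (p - 1) ∣ sd p (n - 1 - k) := sub_one_dvd_sd hp2 hdvd
      have h2 : 1 ≤ sd p (n - 1 - k) := sd_pos hp2 hm0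
      have h3 : p - 1 ≤ sd p (n - 1 - k) := Nat.le_of_dvd h2 h1
      have h4 := sd_pred hp2 (show n ≠ 0 by omega) hpn
      omega
    exact ((bernoulli_val_ge (n-1-k)).mul (PI.nat_dvd (k := 1) (by simpa using hchoose))).mono
      (by omega)
  · exact ((bernoulli_val_nonneg (by omega) hdvd).mul (PI.nat (p := p) _)).mono (by omega)

lemma split_pred {a n : ℕ} (hp2 : 2 ≤ p) (ha : 1 ≤ a) (hn : n = p * a) :
    n - 1 = p * (a - 1) + (p - 1) ∧ sd p (n - 1) = (p - 1) + sd p (a - 1) := by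
  have hn2 : 2 ≤ n := by
    rw [hn]
    calc 2 = 2 * 1 := rfl
    _ ≤ p * a := Nat.mul_le_mul hp2 ha
  have hsplit : n - 1 = p * (a - 1) + (p - 1) := by
    have h1 : p * a = p * (a - 1) + p := by
      have h2 : a = (a - 1) + 1 := by omega
      calc p * a = p * ((a - 1) + 1) := by rw [← h2]
      _ = p * (a - 1) + p := by ring
    omega
  have hmod : (n - 1) % p = p - 1 := by
    rw [hsplit, Nat.mul_add_mod, Nat.mod_eq_of_lt (by omega)]
  have hdiv : (n - 1) / p = a - 1 := by
    rw [hsplit, Nat.mul_add_div (by omega), Nat.div_eq_of_lt (a := p - 1) (by omega), Nat.add_zero]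
  refine ⟨hsplit, ?_⟩
  rw [sd_eq hp2 (by omega : n - 1 ≠ 0), hmod, hdiv]

lemma bernoulli_pred_p : _root_.bernoulli (p - 1) ≠ 0 ∧
    padicValRat p (_root_.bernoulli (p - 1)) = -1 := by
  have hp2 := hp.out.two_le
  refine bernoulli_val_eq_neg_one (by omega) ?_ dvd_rfl
  by_cases hp2' : p = 2
  · right; omega
  · left
    have hodd : p % 2 = 1 := hp.out.eq_two_or_odd.resolve_left hp2'
    omega

/-- Lemma L: if `p ∣ n` then `p` divides the denominator of a coefficient of `B_{n-1}(x)`. -/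
lemma coeff_dvd_den_of_dvd {n : ℕ} (hn : 1 ≤ n) (hpn : p ∣ n) :
    p ∣ ((Polynomial.bernoulli (n-1)).coeff (n - 1 - (p - 1))).den := by
  have hp2 := hp.out.two_le
  have hple : p ≤ n := Nat.le_of_dvd (by omega) hpn
  have hkN : n - 1 - (p - 1) ≤ n - 1 := Nat.sub_le _ _
  rw [coeff_bernoulli hkN]
  have hmk : n - 1 - (n - 1 - (p - 1)) = p - 1 := by omega
  rw [hmk]
  obtain ⟨hBne, hBval⟩ := bernoulli_pred_p (p := p)
  obtain ⟨a, ha⟩ := hpn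
  have ha1 : 1 ≤ a := by
    rcases Nat.eq_zero_or_pos a with h0 | h0
    · rw [h0, Nat.mul_zero] at ha; omega
    · exact h0
  obtain ⟨hsplit, hsd⟩ := split_pred (p := p) hp2 ha1 ha
  have hnd : ¬ p ∣ (n-1).choose (n - 1 - (p - 1)) := by
    apply choose_not_dvd hkN
    have hk : n - 1 - (p - 1) = p * (a - 1) := by omega
    have hk2 : n - 1 - (n - 1 - (p - 1)) = p - 1 := hmk
    rw [hk2, hk, sd_mul_p hp2, sd_small hp2 (show p - 1 < p by omega)]
    omega
  have hcne : (((n-1).choose (n - 1 - (p - 1)) : ℕ) : ℚ) ≠ 0 := by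
    exact_mod_cast (Nat.choose_pos hkN).ne'
  have hne : _root_.bernoulli (p - 1) * (((n-1).choose (n - 1 - (p - 1)) : ℕ) : ℚ) ≠ 0 :=
    mul_ne_zero hBne hcne
  rw [dvd_den_iff hne, padicValRat.mul hBne hcne, hBval]
  have hc0 : padicValRat p (((n-1).choose (n - 1 - (p - 1)) : ℕ) : ℚ) = 0 := by
    rw [padicValRat.of_nat, padicValNat.eq_zero_of_not_dvd hnd]
    rfl
  rw [hc0]
  norm_num

/-- Lemma NI: if `p ∤ n` and `sd p n ≥ p` then some coefficient has `p` in its denominator,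
with valuation exactly `-1`; moreover `p ∤ n` still allows the scaled coefficient to fail. -/
lemma exists_coeff_val_neg {n : ℕ} (hn : 1 ≤ n) (hpn : ¬ p ∣ n) (hsd : p ≤ sd p n) :
    ∃ k, ((Polynomial.bernoulli (n-1)).coeff k) ≠ 0 ∧
      padicValRat p ((Polynomial.bernoulli (n-1)).coeff k) = -1 := by
  have hp2 := hp.out.two_le
  obtain ⟨hpred, hpos⟩ := sd_pred hp2 (by omega : n ≠ 0) hpn
  have hle : p - 1 ≤ sd p (n - 1) := by omega
  obtain ⟨m, hmN, hmsd, hmadd⟩ := exists_subdigits hp2 (n - 1) (p - 1) hle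
  have hm1 : 1 ≤ m := by
    by_contra hc
    have : m = 0 := by omega
    rw [this, sd_zero] at hmsd
    omega
  have hpar : m % 2 = 0 ∨ m = 1 := by
    by_cases hp2' : p = 2
    · subst hp2'
      have : sd 2 m = 1 := by omega
      rcases sd_eq_one_cases (by omega) this with h | h
      · right; exact h
      · left; omega
    · have hodd : p % 2 = 1 := hp.out.eq_two_or_odd.resolve_left hp2'
      have hmod := sd_modEq_two hodd m
      have : m % 2 = sd p m % 2 := hmod
      left; omega
  have hdvd : (p - 1) ∣ m := by
    have h1 := sd_modEq hp2 m
    have h2 : (p - 1) ∣ sd p m := by rw [hmsd]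
    exact (Nat.modEq_zero_iff_dvd).1 (h1.trans ((Nat.modEq_zero_iff_dvd).2 h2))
  obtain ⟨hBne, hBval⟩ := bernoulli_val_eq_neg_one (p := p) hm1 hpar hdvd
  have hnd : ¬ p ∣ (n-1).choose m := choose_not_dvd hmN hmadd
  refine ⟨n - 1 - m, ?_⟩
  rw [coeff_bernoulli (Nat.sub_le _ _), show n - 1 - (n - 1 - m) = m by omega,
    Nat.choose_symm hmN]
  have hcne : (((n-1).choose m : ℕ) : ℚ) ≠ 0 := by
    exact_mod_cast (Nat.choose_pos hmN).ne'
  have hc0 : padicValRat p (((n-1).choose m : ℕ) : ℚ) = 0 := by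
    rw [padicValRat.of_nat, padicValNat.eq_zero_of_not_dvd hnd]
    rfl
  refine ⟨mul_ne_zero hBne hcne, ?_⟩
  rw [padicValRat.mul hBne hcne, hBval, hc0]
  norm_num
end
-- ===== final assembly =====

lemma dhat_eq_one_iff {n : ℕ} (hn : 1 ≤ n) :
    Dhat n = 1 ↔ ∀ p : ℕ, p.Prime → ¬ p ∣ n → sd p n < p := by
  constructor
  · intro h q hq hqn
    by_contra hsd
    have hmem : q ∈ (Finset.range (n + 1)).filter
        (fun p => p.Prime ∧ ¬ p ∣ n ∧ p ≤ sd p n) := by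
      refine Finset.mem_filter.2 ⟨Finset.mem_range.2 ?_, hq, hqn, by omega⟩
      have := sd_le q n
      omega
    have hdvd : q ∣ Dhat n := Finset.dvd_prod_of_mem _ hmem
    rw [h] at hdvd
    have := hq.two_le
    have := Nat.le_of_dvd (by omega) hdvd
    omega
  · intro h
    unfold Dhat
    have hempty : (Finset.range (n + 1)).filter
        (fun p => p.Prime ∧ ¬ p ∣ n ∧ p ≤ sd p n) = ∅ := by
      rw [Finset.filter_eq_empty_iff]
      rintro q _ ⟨h1, h2, h3⟩
      exact absurd (h q h1 h2) (by omega)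
    rw [hempty, Finset.prod_empty]

lemma rad_dvd (n : ℕ) : rad n ∣ n := Nat.prod_primeFactors_dvd n

lemma prime_dvd_rad {n r : ℕ} (hn : n ≠ 0) (hr : r.Prime) (h : r ∣ n) : r ∣ rad n :=
  Finset.dvd_prod_of_mem _ (Nat.mem_primeFactors.2 ⟨hr, h, hn⟩)

lemma coeff_val_ge {p : ℕ} [hp : Fact p.Prime] (N k : ℕ) :
    PI p (-1) ((Polynomial.bernoulli N).coeff k) := by
  rcases Nat.lt_or_ge N k with h | h
  · rw [coeff_bernoulli_high h]; exact Or.inl rfl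
  · rw [coeff_bernoulli h]
    exact ((bernoulli_val_ge (N - k)).mul (PI.nat _)).mono (by omega)

lemma den_dvd_rad {n : ℕ} (hn : 1 ≤ n)
    (hall : ∀ p : ℕ, p.Prime → ¬ p ∣ n → sd p n < p) (k : ℕ) :
    ((Polynomial.bernoulli (n-1)).coeff k).den ∣ rad n := by
  have hq1 : ((Polynomial.bernoulli (n-1)).coeff k) = 0 →
      ((Polynomial.bernoulli (n-1)).coeff k).den = 1 := by
    intro h; rw [h]; rfl
  have hsq : Squarefree ((Polynomial.bernoulli (n-1)).coeff k).den := by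
    rw [Nat.squarefree_iff_prime_squarefree]
    intro r hr hdvd
    haveI : Fact r.Prime := ⟨hr⟩
    have hq0 : ((Polynomial.bernoulli (n-1)).coeff k) ≠ 0 := by
      intro h0
      rw [hq1 h0] at hdvd
      have := Nat.le_of_dvd (by omega) hdvd
      nlinarith [hr.two_le]
    have hv := (pow_dvd_den_iff hq0 (k := 2) (by omega)).1 (by rw [pow_two]; exact hdvd)
    rcases coeff_val_ge (p := r) (n-1) k with h | h
    · exact hq0 h
    · omega
  rw [← Nat.prod_primeFactors_of_squarefree hsq]
  apply Finset.prod_primes_dvd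
  · intro r hrm
    exact (Nat.prime_of_mem_primeFactors hrm).prime
  · intro r hrm
    have hrp := Nat.prime_of_mem_primeFactors hrm
    have hrd : r ∣ ((Polynomial.bernoulli (n-1)).coeff k).den := Nat.dvd_of_mem_primeFactors hrm
    haveI : Fact r.Prime := ⟨hrp⟩
    by_cases hrn : r ∣ n
    · exact prime_dvd_rad (by omega) hrp hrn
    · exfalso
      have hq0 : ((Polynomial.bernoulli (n-1)).coeff k) ≠ 0 := by
        intro h0
        rw [hq1 h0] at hrd
        have := Nat.le_of_dvd (by omega) hrd
        have := hrp.two_le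
        omega
      have hv := (dvd_den_iff hq0).1 hrd
      rcases coeff_val_nonneg hn hrn (hall r hrp hrn) k with h | h
      · exact hq0 h
      · omega

lemma rad_dvd_polyLcm {n : ℕ} (hn : 1 ≤ n) : rad n ∣ polyLcm (Polynomial.bernoulli (n-1)) := by
  unfold rad
  apply Finset.prod_primes_dvd
  · intro r hrm
    exact (Nat.prime_of_mem_primeFactors hrm).prime
  · intro r hrm
    have hrp := Nat.prime_of_mem_primeFactors hrm
    haveI : Fact r.Prime := ⟨hrp⟩
    rw [prime_dvd_polyLcm_iff hrp]
    exact ⟨_, coeff_dvd_den_of_dvd hn (Nat.dvd_of_mem_primeFactors hrm)⟩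

lemma db_eq_rad {n : ℕ} (hn : 1 ≤ n)
    (hall : ∀ p : ℕ, p.Prime → ¬ p ∣ n → sd p n < p) : DB (n-1) = rad n := by
  rw [DB, polyDenom_eq]
  apply Nat.dvd_antisymm
  · exact Finset.lcm_dvd fun b _ => den_dvd_rad hn hall b
  · exact rad_dvd_polyLcm hn

lemma isIntPoly_iff {n : ℕ} (hn : 1 ≤ n) :
    IsIntPoly ((n:ℚ) • Polynomial.bernoulli (n-1)) ↔ Dhat n = 1 := by
  rw [dhat_eq_one_iff hn]
  constructor
  · intro h
    intro q hq hqn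
    haveI : Fact q.Prime := ⟨hq⟩
    by_contra hsd
    obtain ⟨k, hk0, hkval⟩ := exists_coeff_val_neg (p := q) hn hqn (by omega)
    have hIk := h k
    rw [Polynomial.coeff_smul, smul_eq_mul] at hIk
    have hn0 : ((n:ℚ)) ≠ 0 := by
      exact_mod_cast (by omega : n ≠ 0)
    have hprod : ((n:ℚ)) * ((Polynomial.bernoulli (n-1)).coeff k) ≠ 0 := mul_ne_zero hn0 hk0
    have hval : padicValRat q ((n:ℚ) * ((Polynomial.bernoulli (n-1)).coeff k)) = -1 := by
      rw [padicValRat.mul hn0 hk0, hkval, padicValRat.of_nat,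
        padicValNat.eq_zero_of_not_dvd hqn]
      norm_num
    have := (dvd_den_iff hprod).2 (by rw [hval])
    rw [hIk] at this
    have := Nat.le_of_dvd (by omega) this
    have := hq.two_le
    omega
  · intro hall i
    rw [Polynomial.coeff_smul, smul_eq_mul]
    refine Nat.eq_one_iff_not_exists_prime_dvd.2 ?_
    intro r hr hdvd
    haveI : Fact r.Prime := ⟨hr⟩
    have hq0 : (n:ℚ) * ((Polynomial.bernoulli (n-1)).coeff i) ≠ 0 := by
      intro h0
      rw [h0, Rat.den_zero] at hdvd
      have h2 := Nat.le_of_dvd (by omega) hdvd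
      have := hr.two_le
      omega
    have hc0 : ((Polynomial.bernoulli (n-1)).coeff i) ≠ 0 := by
      intro h0; apply hq0; rw [h0, mul_zero]
    have hn0 : ((n:ℚ)) ≠ 0 := by exact_mod_cast (by omega : n ≠ 0)
    have hv := (dvd_den_iff hq0).1 hdvd
    rw [padicValRat.mul hn0 hc0] at hv
    by_cases hrn : r ∣ n
    · have h1 : 1 ≤ padicValRat r ((n:ℚ)) := by
        rw [padicValRat.of_nat]
        rcases (padicValNat_dvd_iff (p := r) 1 n).1 (by simpa using hrn) with h | h
        · omega
        · exact_mod_cast h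
      rcases coeff_val_ge (p := r) (n-1) i with h | h
      · exact hc0 h
      · omega
    · have h1 : padicValRat r ((n:ℚ)) = 0 := by
        rw [padicValRat.of_nat, padicValNat.eq_zero_of_not_dvd hrn]
        rfl
      rcases coeff_val_nonneg hn hrn (hall r hr hrn) i with h | h
      · exact hc0 h
      · omega

lemma dhat_prime {n : ℕ} (hn : 1 ≤ n) (h1 : Dhat n = 1) : (n+1).Prime := by
  by_contra hnp
  have hq : (n+1).minFac.Prime := Nat.minFac_prime (by omega : n + 1 ≠ 1)
  haveI : Fact (n+1).minFac.Prime := ⟨hq⟩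
  have hqd : (n+1).minFac ∣ n + 1 := Nat.minFac_dvd _
  have hqne : (n+1).minFac ≠ n + 1 := by
    intro h
    rw [h] at hq
    exact hnp hq
  obtain ⟨a, ha⟩ := hqd
  have hq2 := hq.two_le
  have ha2 : 2 ≤ a := by
    rcases Nat.lt_or_ge a 2 with h | h
    · interval_cases a
      · omega
      · omega
    · exact h
  have hqn : ¬ (n+1).minFac ∣ n := by
    intro hd
    have := Nat.dvd_sub (⟨a, ha⟩ : (n+1).minFac ∣ n + 1) hd
    rw [Nat.add_sub_cancel_left] at this
    have := Nat.le_of_dvd (by omega) this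
    omega
  obtain ⟨hsplit, hsd⟩ := split_pred (p := (n+1).minFac) hq2 (by omega) ha
  rw [Nat.add_sub_cancel] at hsd
  have hpos : 1 ≤ sd (n+1).minFac (a - 1) := sd_pos hq2 (by omega)
  have := (dhat_eq_one_iff hn).1 h1 (n+1).minFac hq hqn
  omega

end KS

/-- For `n ≥ 1`, `B'_n(x) ∈ ℤ[x] ↔ D̂ n = 1 ↔ DB_{n-1} = rad n`;
moreover in these cases `n + 1` is prime. -/
theorem stmt_7 (n : ℕ) (hn : 1 ≤ n) :
    (IsIntPoly (Polynomial.derivative (Polynomial.bernoulli n)) ↔ Dhat n = 1) ∧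
    (Dhat n = 1 ↔ DB (n - 1) = rad n) ∧
    (IsIntPoly (Polynomial.derivative (Polynomial.bernoulli n)) → (n + 1).Prime) := by
  have hder : Polynomial.derivative (Polynomial.bernoulli n)
      = (n:ℚ) • Polynomial.bernoulli (n-1) := by
    rw [Polynomial.derivative_bernoulli, Polynomial.smul_eq_C_mul]
    norm_cast
  have h1 : IsIntPoly (Polynomial.derivative (Polynomial.bernoulli n)) ↔ Dhat n = 1 := by
    rw [hder]
    exact KS.isIntPoly_iff hn
  refine ⟨h1, ⟨?_, ?_⟩, fun h => KS.dhat_prime hn (h1.1 h)⟩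
  · intro h
    exact KS.db_eq_rad hn ((KS.dhat_eq_one_iff hn).1 h)
  · intro h
    have hdvd : polyDenom (Polynomial.bernoulli (n-1)) ∣ n := by
      have : DB (n-1) ∣ n := h ▸ KS.rad_dvd n
      exact this
    have := (KS.isIntPoly_smul_iff_polyDenom_dvd n (Polynomial.bernoulli (n-1))).2 hdvd
    exact (KS.isIntPoly_iff hn).1 this
end
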